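/- arXiv:1811.02399 — 2 statements merged into one kernel-verified Lean document; each statement's English description precedes it below -/
import Mathlib

section
/- Let X be a non-separable, reflexive complex Banach space with few operators, i.e. every bounded linear operator T : X → X can be written as T = α·id_X + S with α ∈ ℂ and S a bounded operator with separable range, and let E = X'. Then there exists a left ideal I of B(E) that is closed in the weak operator topology but is not the WOT-closure of any finitely generated left ideal: for every n ∈ ℕ and all T_1, …, T_n ∈ I, the closure of B(E)T_1 + ⋯ + B(E)T_n in the weak operator topology is a proper subset of I. (One may take I = { T ∈ B(E) : T x = 0 for all x ∈ D } for a suitable closed subspace D of E.) -/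
open NormedSpace TopologicalSpace

lemma aux_hb_vanish {V : Type*} [NormedAddCommGroup V] [NormedSpace ℂ V]
    (N : Submodule ℂ V) (hN : IsClosed (N : Set V)) {x : V} (hx : x ∉ N) :
    ∃ f : V →L[ℂ] ℂ, (∀ y ∈ N, f y = 0) ∧ f x = 1 := by
  haveI : IsClosed (N : Set V) := hN
  set xq : V ⧸ N := Submodule.Quotient.mk x with hxq
  have hxq0 : xq ≠ 0 := by
    simpa [hxq, Submodule.Quotient.mk_eq_zero] using hx
  obtain ⟨g, hg1, hgx⟩ := exists_dual_vector ℂ xq (norm_ne_zero_iff.2 hxq0)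
  have hmkcont : ∀ y : V, ‖(Submodule.Quotient.mk y : V ⧸ N)‖ ≤ 1 * ‖y‖ := by
    intro y; simpa using Submodule.Quotient.norm_mk_le (S := N) y
  set mkc : V →L[ℂ] V ⧸ N := LinearMap.mkContinuous N.mkQ 1 hmkcont with hmkc
  have hnorm : ‖xq‖ ≠ 0 := by simpa using hxq0
  refine ⟨((‖xq‖ : ℂ)⁻¹) • (g.comp mkc), ?_, ?_⟩
  · intro y hy
    have : (Submodule.Quotient.mk y : V ⧸ N) = 0 := (Submodule.Quotient.mk_eq_zero N).2 hy
    simp [mkc, Submodule.mkQ_apply, LinearMap.mkContinuous_apply, this]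
    exact Or.inr (by rw [show (N.mkQ.mkContinuous 1 hmkcont) y = 0 from this, map_zero])
  · have : mkc x = xq := rfl
    simp [this, hgx]
    rw [inv_mul_cancel₀]
    exact_mod_cast hnorm

lemma aux_sep_not {V : Type*} [MetricSpace V] {s : Set V} {ε : ℝ} (hε : 0 < ε)
    (hsep : ∀ p ∈ s, ∀ q ∈ s, p ≠ q → ε ≤ dist p q) (hs : ¬ s.Countable) :
    ¬ IsSeparable s := by
  rintro ⟨c, hc, hsc⟩
  have hchoice : ∀ p ∈ s, ∃ y ∈ c, dist p y < ε / 2 := by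
    intro p hp
    exact Metric.mem_closure_iff.1 (hsc hp) (ε / 2) (by positivity)
  classical
  set φ : V → V := fun p => if h : p ∈ s then (hchoice p h).choose else p with hφ
  have hφc : ∀ p ∈ s, φ p ∈ c ∧ dist p (φ p) < ε / 2 := by
    intro p hp
    simp only [hφ, dif_pos hp]
    exact ⟨(hchoice p hp).choose_spec.1, (hchoice p hp).choose_spec.2⟩
  have hmaps : Set.MapsTo φ s c := fun p hp => (hφc p hp).1
  have hinj : Set.InjOn φ s := by
    intro p hp q hq hpq
    by_contra hne
    have h1 := (hφc p hp).2
    have h2 := (hφc q hq).2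
    have h3 : ε ≤ dist p q := hsep p hp q hq hne
    have h4 : dist p q ≤ dist p (φ p) + dist (φ p) q := dist_triangle p (φ p) q
    have h5 : dist (φ p) q = dist q (φ q) := by rw [hpq, dist_comm]
    linarith
  exact hs (hmaps.countable_of_injOn hinj hc)

lemma aux_condensation {β : Type*} [TopologicalSpace β] [SecondCountableTopology β]
    {t : Set β} (ht : ¬ t.Countable) : ∃ p ∈ t, p ∈ closure (t \ {p}) := by
  by_contra h
  push_neg at h
  classical
  have hb := TopologicalSpace.isBasis_countableBasis β
  have hbc := TopologicalSpace.countable_countableBasis β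
  have hchoice : ∀ p ∈ t, ∃ U ∈ countableBasis β, p ∈ U ∧ U ⊆ (closure (t \ {p}))ᶜ := by
    intro p hp
    have hopen : IsOpen (closure (t \ {p}))ᶜ := isClosed_closure.isOpen_compl
    have hmem : p ∈ (closure (t \ {p}))ᶜ := h p hp
    obtain ⟨U, hU, hpU, hUsub⟩ := hb.exists_subset_of_mem_open hmem hopen
    exact ⟨U, hU, hpU, hUsub⟩
  set φ : β → Set β := fun p => if h : p ∈ t then (hchoice p h).choose else ∅ with hφ
  have hφp : ∀ p ∈ t, φ p ∈ countableBasis β ∧ p ∈ φ p ∧ φ p ⊆ (closure (t \ {p}))ᶜ := by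
    intro p hp
    simp only [hφ, dif_pos hp]
    exact ⟨(hchoice p hp).choose_spec.1, (hchoice p hp).choose_spec.2.1,
      (hchoice p hp).choose_spec.2.2⟩
  have hmaps : Set.MapsTo φ t (countableBasis β) := fun p hp => (hφp p hp).1
  have hinj : Set.InjOn φ t := by
    intro p hp q hq hpq
    by_contra hne
    have hq' : q ∈ t \ {p} := ⟨hq, fun hh => hne (hh.symm ▸ rfl)⟩
    have : q ∈ φ p := hpq ▸ (hφp q hq).2.1
    exact ((hφp p hp).2.2 this) (subset_closure hq')
  exact ht (hmaps.countable_of_injOn hinj hbc)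

lemma aux_split {γ : Type*} {Q : Set γ} (hQ : ¬ Q.Countable) :
    ∃ A B : Set γ, A ⊆ Q ∧ B ⊆ Q ∧ Disjoint A B ∧ ¬ A.Countable ∧ ¬ B.Countable := by
  have hQ' : ¬ Countable ↥Q := by rwa [Set.countable_coe_iff]
  have hinf : Cardinal.aleph0 ≤ Cardinal.mk ↥Q := by
    rw [Cardinal.aleph0_le_mk_iff]
    exact ⟨fun hfin => hQ' hfin.to_countable⟩
  have hsum : Cardinal.mk (↥Q ⊕ ↥Q) = Cardinal.mk ↥Q := by
    simp [Cardinal.mk_sum, Cardinal.add_eq_self hinf]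
  obtain ⟨e⟩ := Cardinal.eq.1 hsum
  have key : ∀ (j : ↥Q → ↥Q ⊕ ↥Q), Function.Injective j →
      ¬ (Subtype.val '' (Set.range (fun q => e (j q)))).Countable := by
    intro j hj hcnt
    have h1 : (Set.range fun q => e (j q)).Countable :=
      Set.countable_of_injective_of_countable_image (Subtype.val_injective.injOn) hcnt
    have hi : Function.Injective (fun q => e (j q)) := fun a b hab => hj (e.injective hab)
    have := Set.countable_coe_iff.2 h1
    have h2 : Countable ↥Q :=
      Function.Injective.countable (f := fun (q : ↥Q) =>
        (⟨e (j q), Set.mem_range_self q⟩ : ↥(Set.range fun q => e (j q))))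
        (fun a b hab => hi (congrArg Subtype.val hab))
    exact hQ' h2
  refine ⟨Subtype.val '' (Set.range (fun q => e (Sum.inl q))),
    Subtype.val '' (Set.range (fun q => e (Sum.inr q))), ?_, ?_, ?_,
    key Sum.inl Sum.inl_injective, key Sum.inr Sum.inr_injective⟩
  · rintro _ ⟨q, -, rfl⟩; exact q.2
  · rintro _ ⟨q, -, rfl⟩; exact q.2
  · rw [Set.disjoint_left]
    rintro _ ⟨q, ⟨a, rfl⟩, rfl⟩ ⟨q', ⟨b, hb⟩, hval⟩
    have h3 : e (Sum.inr b) = e (Sum.inl a) := Subtype.val_injective (by simp only at hb; rw [hb]; exact hval)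
    exact Sum.inl_ne_inr (e.injective h3).symm

lemma aux_dual_sep {V : Type*} [NormedAddCommGroup V] [NormedSpace ℂ V]
    (h : IsSeparable (Set.univ : Set (StrongDual ℂ V))) : SeparableSpace V := by
  classical
  obtain ⟨c, hc, hsub⟩ := h
  have hne : (c ∪ {0}).Nonempty := Set.union_nonempty.2 (Or.inr ⟨0, rfl⟩)
  obtain ⟨d, hd⟩ := (hc.union (Set.countable_singleton 0)).exists_eq_range hne
  have hx : ∀ m : ℕ, ∃ x : V, ‖x‖ < 1 ∧ (d m ≠ 0 → ‖d m‖ / 2 < ‖(d m) x‖) := by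
    intro m
    by_cases hm : d m = 0
    · exact ⟨0, by simp, fun hh => absurd hm hh⟩
    · have hlt : ‖d m‖ / 2 < ‖d m‖ := by
        have : 0 < ‖d m‖ := norm_pos_iff.2 hm
        linarith
      obtain ⟨x, hx1, hx2⟩ := (d m).exists_lt_apply_of_lt_opNorm hlt
      exact ⟨x, hx1, fun _ => hx2⟩
  choose xs hxs1 hxs2 using hx
  set M : Submodule ℂ V := (Submodule.span ℂ (Set.range xs)).topologicalClosure with hM
  have hMtop : M = ⊤ := by
    by_contra hne'
    obtain ⟨y, hy⟩ : ∃ y : V, y ∉ M := by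
      by_contra hall
      push_neg at hall
      exact hne' (Submodule.eq_top_iff'.2 hall)
    obtain ⟨f, hf0, hf1⟩ := aux_hb_vanish M (Submodule.isClosed_topologicalClosure _) hy
    have hfne : f ≠ 0 := by
      intro hh
      rw [hh] at hf1
      simpa using hf1
    have hfpos : 0 < ‖f‖ := norm_pos_iff.2 hfne
    have hfc : f ∈ closure (c ∪ {0}) := by
      apply closure_mono Set.subset_union_left
      exact hsub (Set.mem_univ f)
    obtain ⟨g, hg1, hg2⟩ := Metric.mem_closure_iff.1 hfc (‖f‖ / 4) (by positivity)
    obtain ⟨m, rfl⟩ : ∃ m, d m = g := by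
      have : g ∈ Set.range d := hd ▸ hg1
      exact this.imp (fun m hm => hm)
    have hdist : ‖f - d m‖ < ‖f‖ / 4 := by rwa [dist_eq_norm] at hg2
    have hdm : ‖f‖ - ‖f‖/4 ≤ ‖d m‖ := by
      have := norm_sub_norm_le f (d m)
      linarith [le_of_lt hdist]
    have hdmne : d m ≠ 0 := by
      intro hh
      rw [hh] at hdm
      simp at hdm
      linarith
    have hkey := hxs2 m hdmne
    have hfx : f (xs m) = 0 := by
      apply hf0
      exact Submodule.le_topologicalClosure _ (Submodule.subset_span (Set.mem_range_self m))
    have : ‖(d m) (xs m)‖ = ‖(d m - f) (xs m)‖ := by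
      simp [ContinuousLinearMap.sub_apply, hfx]
    have hb2 : ‖(d m - f) (xs m)‖ ≤ ‖d m - f‖ * ‖xs m‖ := (d m - f).le_opNorm _
    have hb3 : ‖d m - f‖ * ‖xs m‖ ≤ ‖d m - f‖ * 1 := by
      apply mul_le_mul_of_nonneg_left (le_of_lt (hxs1 m)) (norm_nonneg _)
    have hb4 : ‖d m - f‖ < ‖f‖ / 4 := by rwa [norm_sub_rev]
    linarith
  have : IsSeparable (M : Set V) := by
    rw [hM, Submodule.topologicalClosure_coe]
    exact ((Set.countable_range xs).isSeparable.span (R := ℂ)).closure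
  rw [hMtop] at this
  rw [← isSeparable_univ_iff]
  simpa using this

lemma aux_ext (X : Type*) [NormedAddCommGroup X] [NormedSpace ℂ X]
    (hnonsep : ¬ SeparableSpace X)
    (hrefl : Function.Surjective (inclusionInDoubleDual ℂ X))
    {M : Submodule ℂ X} (hM : IsSeparable (M : Set X))
    {G : Set (StrongDual ℂ X)} (hG : G.Countable) :
    ∃ x : X, x ∉ M ∧ ∀ g ∈ G, g x = 0 := by
  classical
  obtain ⟨c, hc, hMc⟩ := hM
  set φ : X → StrongDual ℂ X := fun y =>
    if h : y = 0 then 0 else (exists_dual_vector ℂ y (norm_ne_zero_iff.2 h)).choose with hφ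
  have hφ_spec : ∀ y : X, y ≠ 0 → ‖φ y‖ = 1 ∧ (φ y) y = (‖y‖ : ℂ) := by
    intro y hy
    simp only [hφ, dif_neg hy]
    exact (exists_dual_vector ℂ y (norm_ne_zero_iff.2 hy)).choose_spec
  set G2 : Set (StrongDual ℂ X) := φ '' c with hG2
  set H : Submodule ℂ (StrongDual ℂ X) := (Submodule.span ℂ (G ∪ G2)).topologicalClosure with hH
  by_cases hHtop : H = ⊤
  · exfalso
    apply hnonsep
    apply aux_dual_sep
    have h1 : IsSeparable (H : Set (StrongDual ℂ X)) := by
      rw [hH, Submodule.topologicalClosure_coe]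
      exact ((hG.union (hc.image φ)).isSeparable.span (R := ℂ)).closure
    rw [hHtop] at h1
    simpa using h1
  · obtain ⟨h0, hh0⟩ : ∃ h0 : StrongDual ℂ X, h0 ∉ H := by
      by_contra hall
      push_neg at hall
      exact hHtop (Submodule.eq_top_iff'.2 hall)
    obtain ⟨Φ, hΦ0, hΦ1⟩ := aux_hb_vanish H (Submodule.isClosed_topologicalClosure _) hh0
    obtain ⟨x, hx⟩ := hrefl Φ
    have hxg : ∀ g : StrongDual ℂ X, g ∈ G ∪ G2 → g x = 0 := by
      intro g hg
      have hgH : g ∈ H := Submodule.le_topologicalClosure _ (Submodule.subset_span hg)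
      have : Φ g = 0 := hΦ0 g hgH
      rw [← hx] at this
      simpa [NormedSpace.dual_def] using this
    have hxne : x ≠ 0 := by
      intro hh
      rw [hh] at hx
      have : Φ = 0 := by rw [← hx]; simp
      rw [this] at hΦ1
      simpa using hΦ1
    refine ⟨x, ?_, fun g hg => hxg g (Or.inl hg)⟩
    intro hxM
    have hxc : x ∈ closure c := hMc hxM
    have hsmall : ∀ ε : ℝ, 0 < ε → ‖x‖ ≤ 2 * ε := by
      intro ε hε
      obtain ⟨y, hy1, hy2⟩ := Metric.mem_closure_iff.1 hxc ε hε
      rw [dist_eq_norm] at hy2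
      by_cases hy0 : y = 0
      · rw [hy0] at hy2; simp at hy2; linarith
      · have hspec := hφ_spec y hy0
        have hφyx : (φ y) x = 0 := hxg (φ y) (Or.inr ⟨y, hy1, rfl⟩)
        have : (‖y‖ : ℂ) = (φ y) (y - x) := by
          rw [map_sub, hφyx, hspec.2]; ring
        have hb : ‖y‖ ≤ ‖y - x‖ := by
          calc ‖y‖ = ‖(φ y) (y - x)‖ := by rw [← this]; simp
            _ ≤ ‖φ y‖ * ‖y - x‖ := (φ y).le_opNorm _
            _ = ‖y - x‖ := by rw [hspec.1]; ring
        have h1 : ‖y - x‖ = ‖x - y‖ := norm_sub_rev _ _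
        have h2 : ‖x‖ ≤ ‖y‖ + ‖x - y‖ := by
          calc ‖x‖ = ‖y + (x - y)‖ := by congr 1; abel
            _ ≤ ‖y‖ + ‖x - y‖ := norm_add_le _ _
        linarith
    have : ‖x‖ ≤ 0 := by
      by_contra hpos
      push_neg at hpos
      have := hsmall (‖x‖ / 3) (by linarith)
      linarith
    exact hxne (norm_le_zero_iff.1 this)

lemma aux_biorth (X : Type*) [NormedAddCommGroup X] [NormedSpace ℂ X]
    (hnonsep : ¬ SeparableSpace X)
    (hrefl : Function.Surjective (inclusionInDoubleDual ℂ X)) :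
    ∃ P : Set (X × StrongDual ℂ X), ¬ P.Countable ∧ (∀ p ∈ P, p.2 p.1 = 1) ∧
      (∀ p ∈ P, ∀ q ∈ P, p ≠ q → p.2 q.1 = 0) := by
  classical
  set S : Set (Set (X × StrongDual ℂ X)) :=
    {P | (∀ p ∈ P, p.2 p.1 = 1) ∧ (∀ p ∈ P, ∀ q ∈ P, p ≠ q → p.2 q.1 = 0)} with hS
  have hub : ∀ ch ⊆ S, IsChain (· ⊆ ·) ch → ∃ ub ∈ S, ∀ s ∈ ch, s ⊆ ub := by
    intro ch hch hchain
    refine ⟨⋃₀ ch, ⟨?_, ?_⟩, fun s hs => Set.subset_sUnion_of_mem hs⟩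
    · rintro p ⟨t, ht, hpt⟩
      exact (hch ht).1 p hpt
    · rintro p ⟨t, ht, hpt⟩ q ⟨t', ht', hqt⟩ hpq
      rcases hchain.total ht ht' with h | h
      · exact (hch ht').2 p (h hpt) q hqt hpq
      · exact (hch ht).2 p hpt q (h hqt) hpq
  obtain ⟨P, hPS, hPmax⟩ : ∃ P ∈ S, ∀ Q ∈ S, P ⊆ Q → Q = P := by
    obtain ⟨P, hm⟩ := zorn_subset S hub
    exact ⟨P, hm.prop, fun Q hQ hPQ => (hm.eq_of_le hQ hPQ).symm⟩
  refine ⟨P, ?_, hPS.1, hPS.2⟩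
  intro hPc
  set M : Submodule ℂ X := (Submodule.span ℂ (Prod.fst '' P)).topologicalClosure with hM
  have hMsep : IsSeparable (M : Set X) := by
    rw [hM, Submodule.topologicalClosure_coe]
    exact (((hPc.image Prod.fst).isSeparable).span (R := ℂ)).closure
  obtain ⟨x, hxM, hxG⟩ := aux_ext X hnonsep hrefl hMsep (hPc.image Prod.snd)
  obtain ⟨f, hf0, hf1⟩ := aux_hb_vanish M (Submodule.isClosed_topologicalClosure _) hxM
  have hfst : ∀ p ∈ P, p.1 ∈ M := fun p hp =>
    Submodule.le_topologicalClosure _ (Submodule.subset_span ⟨p, hp, rfl⟩)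
  have hnew : (x, f) ∉ P := by
    intro hmem
    exact hxM (hfst _ hmem)
  have hS' : insert (x, f) P ∈ S := by
    constructor
    · rintro p (rfl | hp)
      · exact hf1
      · exact hPS.1 p hp
    · rintro p (rfl | hp) q (rfl | hq) hpq
      · exact absurd rfl hpq
      · exact hf0 _ (hfst q hq)
      · exact hxG p.2 ⟨p, hp, rfl⟩
      · exact hPS.2 p hp q hq hpq
  have := hPmax _ hS' (Set.subset_insert _ _)
  exact hnew (this ▸ Set.mem_insert _ _)

lemma aux_preadjoint (X : Type*) [NormedAddCommGroup X] [NormedSpace ℂ X]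
    (hrefl : Function.Surjective (inclusionInDoubleDual ℂ X))
    (T : StrongDual ℂ X →L[ℂ] StrongDual ℂ X) :
    ∃ S : X →L[ℂ] X, ∀ (x' : StrongDual ℂ X) (x : X), T x' x = x' (S x) := by
  have hsurj : Function.Surjective (inclusionInDoubleDualLi ℂ (E := X)) := hrefl
  set κ : X ≃ₗᵢ[ℂ] StrongDual ℂ (StrongDual ℂ X) :=
    LinearIsometryEquiv.ofSurjective (inclusionInDoubleDualLi ℂ (E := X)) hsurj with hκ
  have hκap : ∀ (x : X) (x' : StrongDual ℂ X), κ x x' = x' x := fun x x' => rfl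
  set Slin : X →ₗ[ℂ] X :=
    { toFun := fun x => κ.symm ((κ x).comp T)
      map_add' := by
        intro a b
        show κ.symm ((κ (a + b)).comp T) = κ.symm ((κ a).comp T) + κ.symm ((κ b).comp T)
        have h : (κ (a + b)).comp T = (κ a).comp T + (κ b).comp T := by
          rw [map_add]; exact ContinuousLinearMap.add_comp _ _ _
        rw [h, map_add]
      map_smul' := by
        intro m a
        show κ.symm ((κ (m • a)).comp T) = m • κ.symm ((κ a).comp T)
        have h : (κ (m • a)).comp T = m • ((κ a).comp T) := by
          rw [map_smul]; exact ContinuousLinearMap.smul_comp _ _ _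
        rw [h, map_smul] } with hSlin
  have hbound : ∀ x : X, ‖Slin x‖ ≤ ‖T‖ * ‖x‖ := by
    intro x
    have : ‖Slin x‖ = ‖(κ x).comp T‖ := by
      simp only [hSlin, LinearMap.coe_mk, AddHom.coe_mk]
      rw [LinearIsometryEquiv.norm_map]
    rw [this]
    calc ‖(κ x).comp T‖ ≤ ‖κ x‖ * ‖T‖ := ContinuousLinearMap.opNorm_comp_le _ _
      _ = ‖x‖ * ‖T‖ := by rw [LinearIsometryEquiv.norm_map]
      _ = ‖T‖ * ‖x‖ := mul_comm _ _
  refine ⟨Slin.mkContinuous ‖T‖ hbound, ?_⟩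
  intro x' x
  have h1 : (Slin.mkContinuous ‖T‖ hbound) x = κ.symm ((κ x).comp T) := rfl
  rw [h1, ← hκap (κ.symm ((κ x).comp T)) x', LinearIsometryEquiv.apply_symm_apply]
  exact rfl

set_option maxHeartbeats 2000000 in
/-- **Theorem 2.5.13.** Let `X` be a non-separable, reflexive complex Banach space with few
operators, and let `E = X'`. Then there is a left ideal `I` of `B(E)`, closed in the weak
operator topology, which is not the WOT-closure of any finitely generated left ideal: for all
`T_1, …, T_n ∈ I`, the WOT-closure of `B(E)T_1 + ⋯ + B(E)T_n` is a proper subset of `I`.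
(Hence the dual Banach algebra `B(E)` is not weak*-topologically left Noetherian.) -/
theorem exists_WOT_closed_left_ideal_not_finitely_generated
    (X : Type*) [NormedAddCommGroup X] [NormedSpace ℂ X] [CompleteSpace X]
    (hnonsep : ¬ SeparableSpace X)
    (hrefl : Function.Surjective (inclusionInDoubleDual ℂ X))
    (hfew : ∀ T : X →L[ℂ] X, ∃ (α : ℂ) (S : X →L[ℂ] X),
      T = α • ContinuousLinearMap.id ℂ X + S ∧ IsSeparable (Set.range S)) :
    ∃ I : Submodule ℂ (StrongDual ℂ X →L[ℂ] StrongDual ℂ X),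
      (∀ S : StrongDual ℂ X →L[ℂ] StrongDual ℂ X, ∀ T ∈ I, S ∘L T ∈ I) ∧
      IsClosed ((ContinuousLinearMapWOT.ofCLM : (StrongDual ℂ X →L[ℂ] StrongDual ℂ X) → (StrongDual ℂ X →WOT[ℂ] StrongDual ℂ X)) '' (I : Set _) :
        Set ((StrongDual ℂ X) →WOT[ℂ] (StrongDual ℂ X))) ∧
      (∀ (n : ℕ), 0 < n → ∀ T : Fin n → (StrongDual ℂ X →L[ℂ] StrongDual ℂ X), (∀ i, T i ∈ I) →
        (ContinuousLinearMapWOT.ofCLM : (StrongDual ℂ X →L[ℂ] StrongDual ℂ X) → (StrongDual ℂ X →WOT[ℂ] StrongDual ℂ X)) ⁻¹'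
            closure ((ContinuousLinearMapWOT.ofCLM : (StrongDual ℂ X →L[ℂ] StrongDual ℂ X) → (StrongDual ℂ X →WOT[ℂ] StrongDual ℂ X)) ''
              {W : StrongDual ℂ X →L[ℂ] StrongDual ℂ X |
                ∃ A : Fin n → (StrongDual ℂ X →L[ℂ] StrongDual ℂ X), W = ∑ i, A i ∘L T i})
          ⊂ (I : Set (StrongDual ℂ X →L[ℂ] StrongDual ℂ X))) := by
  classical
  obtain ⟨P, hPc, hbi1, hbi2⟩ := aux_biorth X hnonsep hrefl
  -- distinct pairs have distinct first components
  have hfstne : ∀ p ∈ P, ∀ q ∈ P, p ≠ q → p.1 ≠ q.1 := by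
    intro p hp q hq hpq h1
    have h0 := hbi2 p hp q hq hpq
    rw [← h1, hbi1 p hp] at h0
    exact one_ne_zero h0
  -- pigeonhole on the norms of the functionals
  obtain ⟨n₀, hQc⟩ : ∃ n₀ : ℕ, ¬ {p ∈ P | ‖p.2‖ ≤ (n₀ : ℝ)}.Countable := by
    by_contra hall
    push_neg at hall
    apply hPc
    have hcover : P = ⋃ n : ℕ, {p ∈ P | ‖p.2‖ ≤ (n : ℝ)} := by
      ext p
      simp only [Set.mem_iUnion, Set.mem_setOf_eq]
      constructor
      · intro hp
        obtain ⟨n, hn⟩ := exists_nat_ge ‖p.2‖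
        exact ⟨n, hp, hn⟩
      · rintro ⟨n, hp, -⟩; exact hp
    rw [hcover]
    exact Set.countable_iUnion hall
  set Q : Set (X × StrongDual ℂ X) := {p ∈ P | ‖p.2‖ ≤ (n₀ : ℝ)} with hQdef
  have hQP : Q ⊆ P := fun p hp => hp.1
  have hQnorm : ∀ p ∈ Q, ‖p.2‖ ≤ (n₀ : ℝ) := fun p hp => hp.2
  have hn₀pos : (0 : ℝ) < (n₀ : ℝ) := by
    obtain ⟨p, hp⟩ : Q.Nonempty := by
      by_contra h
      rw [Set.not_nonempty_iff_eq_empty] at h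
      exact hQc (h ▸ Set.countable_empty)
    have hne : p.2 ≠ 0 := by
      intro h0
      have := hbi1 p (hQP hp)
      rw [h0] at this
      simpa using this
    exact lt_of_lt_of_le (norm_pos_iff.2 hne) (hQnorm p hp)
  obtain ⟨A, B, hAQ, hBQ, hABdisj, hAc, hBc⟩ := aux_split hQc
  set Y : Submodule ℂ X := (Submodule.span ℂ (Prod.fst '' A)).topologicalClosure with hY
  have hfstA : Prod.fst '' A ⊆ (Y : Set X) := fun x hx =>
    Submodule.le_topologicalClosure _ (Submodule.subset_span hx)
  -- Y is not separable
  have hYns : ¬ IsSeparable (Y : Set X) := by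
    intro hsep
    have hAsep : IsSeparable (Prod.fst '' A) := hsep.mono hfstA
    refine aux_sep_not (ε := 1 / (n₀ : ℝ)) (by positivity) ?_ ?_ hAsep
    · rintro _ ⟨p, hpA, rfl⟩ _ ⟨q, hqA, rfl⟩ hne
      have hpq : p ≠ q := fun h => hne (by rw [h])
      have hpP := hQP (hAQ hpA)
      have hqP := hQP (hAQ hqA)
      have h1 : p.2 p.1 = 1 := hbi1 p hpP
      have h0 : p.2 q.1 = 0 := hbi2 p hpP q hqP hpq
      have hcalc : (1 : ℝ) ≤ ‖p.2‖ * dist p.1 q.1 := by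
        have : p.2 (p.1 - q.1) = 1 := by rw [map_sub, h1, h0, sub_zero]
        calc (1 : ℝ) = ‖p.2 (p.1 - q.1)‖ := by rw [this]; simp
          _ ≤ ‖p.2‖ * ‖p.1 - q.1‖ := p.2.le_opNorm _
          _ = ‖p.2‖ * dist p.1 q.1 := by rw [dist_eq_norm]
      have hb : ‖p.2‖ ≤ (n₀ : ℝ) := hQnorm p (hAQ hpA)
      have hd : (0:ℝ) ≤ dist p.1 q.1 := dist_nonneg
      rw [div_le_iff₀ hn₀pos]
      nlinarith
    · intro hcnt
      apply hAc
      apply Set.countable_of_injective_of_countable_image ?_ hcnt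
      intro p hp q hq hfst
      by_contra hne
      exact hfstne p (hQP (hAQ hp)) q (hQP (hAQ hq)) hne hfst
  -- the key fact: operators in the ideal have zero scalar part
  have key : ∀ T₀ : StrongDual ℂ X →L[ℂ] StrongDual ℂ X,
      (∀ x' : StrongDual ℂ X, (∀ y ∈ Y, x' y = 0) → T₀ x' = 0) →
      ∀ (S₀ R₀ : X →L[ℂ] X) (a : ℂ),
      (∀ (x' : StrongDual ℂ X) (x : X), T₀ x' x = x' (S₀ x)) →
      S₀ = a • ContinuousLinearMap.id ℂ X + R₀ →
      IsSeparable (Set.range R₀) → a = 0 := by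
    intro T₀ hmem S₀ R₀ a hTS hSR hRsep₀
    by_contra ha
    have hapos : (0:ℝ) < ‖a‖ := norm_pos_iff.2 ha
    -- functionals indexed by B annihilate Y
    have hBann : ∀ p ∈ B, ∀ y ∈ Y, p.2 y = 0 := by
      intro p hpB y hy
      have hgen : Prod.fst '' A ⊆ ((LinearMap.ker ((p.2 : X →L[ℂ] ℂ) : X →ₗ[ℂ] ℂ) : Submodule ℂ X) : Set X) := by
        rintro _ ⟨q, hqA, rfl⟩
        have hpq : p ≠ q := fun h =>
          Set.disjoint_left.1 hABdisj (by rw [h]; exact hqA) hpB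
        exact LinearMap.mem_ker.2 (hbi2 p (hQP (hBQ hpB)) q (hQP (hAQ hqA)) hpq)
      have hle : Y ≤ LinearMap.ker ((p.2 : X →L[ℂ] ℂ) : X →ₗ[ℂ] ℂ) :=
        (Submodule.span ℂ (Prod.fst '' A)).topologicalClosure_minimal
          (Submodule.span_le.2 hgen) (ContinuousLinearMap.isClosed_ker p.2)
      exact LinearMap.mem_ker.1 (hle hy)
    -- the functional equation forced by membership in the ideal
    have hfb : ∀ p ∈ B, ∀ x : X, a * p.2 x + p.2 (R₀ x) = 0 := by
      intro p hpB x
      have h0 : T₀ p.2 = 0 := hmem p.2 (hBann p hpB)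
      have h1 : (0:ℂ) = p.2 (S₀ x) := by
        rw [← hTS p.2 x, h0]
        simp
      have h2 : S₀ x = a • x + R₀ x := by rw [hSR]; simp
      rw [h2, map_add, map_smul, smul_eq_mul] at h1
      linear_combination -h1
    -- a countable dense sequence for the range of R₀
    obtain ⟨c, hc, hcR⟩ := hRsep₀
    obtain ⟨z, hz⟩ := (hc.union (Set.countable_singleton 0)).exists_eq_range
      ⟨0, Or.inr rfl⟩
    set Φm : (X × StrongDual ℂ X) → ℕ → ℂ := fun p m => p.2 (z m) with hΦm
    have hagree : ∀ p ∈ B, ∀ q ∈ B, Φm p = Φm q → p.2 = q.2 := by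
      intro p hpB q hqB hΦ
      have hcl : ∀ x ∈ closure c, p.2 x = q.2 x := by
        intro x hx
        have hcsub : c ⊆ {x : X | p.2 x = q.2 x} := by
          intro y hy
          have hyz : y ∈ Set.range z := by rw [← hz]; exact Or.inl hy
          obtain ⟨m, rfl⟩ := hyz
          exact congrFun hΦ m
        have hclosed : IsClosed {x : X | p.2 x = q.2 x} :=
          isClosed_eq p.2.continuous q.2.continuous
        exact (closure_minimal hcsub hclosed) hx
      ext x
      have e1 := hfb p hpB x
      have e2 := hfb q hqB x
      have e3 : p.2 (R₀ x) = q.2 (R₀ x) := hcl (R₀ x) (hcR (Set.mem_range_self x))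
      have : a * p.2 x = a * q.2 x := by linear_combination e1 - e2 - e3
      exact mul_left_cancel₀ ha this
    have hinjΦ : Set.InjOn Φm B := by
      intro p hpB q hqB hΦ
      by_contra hne
      have h2 := hagree p hpB q hqB hΦ
      have h0 := hbi2 p (hQP (hBQ hpB)) q (hQP (hBQ hqB)) hne
      rw [h2, hbi1 q (hQP (hBQ hqB))] at h0
      exact one_ne_zero h0
    have htc : ¬ (Φm '' B).Countable := fun h =>
      hBc (Set.countable_of_injective_of_countable_image hinjΦ h)
    obtain ⟨w, hwmem, hwcl⟩ := aux_condensation htc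
    obtain ⟨pst, hpstB, hpstw⟩ := hwmem
    obtain ⟨u, hu1, hu2⟩ := mem_closure_iff_seq_limit.1 hwcl
    have hqk : ∀ k, ∃ q, q ∈ B ∧ Φm q = u k ∧ q ≠ pst := by
      intro k
      obtain ⟨⟨q, hqB, hq⟩, hne⟩ := hu1 k
      refine ⟨q, hqB, hq, ?_⟩
      rintro rfl
      exact hne (by rw [Set.mem_singleton_iff, ← hq, hpstw])
    choose qk hqkB hqku hqkne using hqk
    have hq0 : ∀ k, (qk k).2 pst.1 = 0 := fun k =>
      hbi2 (qk k) (hQP (hBQ (hqkB k))) pst (hQP (hBQ hpstB)) (hqkne k)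
    have hp1 : pst.2 pst.1 = 1 := hbi1 pst (hQP (hBQ hpstB))
    have hpR : pst.2 (R₀ pst.1) = -a := by
      have h := hfb pst hpstB pst.1
      rw [hp1] at h
      linear_combination h
    have hqR : ∀ k, (qk k).2 (R₀ pst.1) = 0 := by
      intro k
      have h := hfb (qk k) (hqkB k) pst.1
      rw [hq0 k] at h
      linear_combination h
    have hRc : R₀ pst.1 ∈ closure (Set.range z) := by
      apply closure_mono (show c ⊆ Set.range z by rw [← hz]; exact Set.subset_union_left)
      exact hcR (Set.mem_range_self pst.1)
    set ε : ℝ := ‖a‖ / (4 * ((n₀:ℝ) + 1)) with hε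
    have hεpos : 0 < ε := by positivity
    obtain ⟨zz, hzz, hzm⟩ := Metric.mem_closure_iff.1 hRc ε hεpos
    obtain ⟨m, rfl⟩ := hzz
    have hcoord : Filter.Tendsto (fun k => u k m) Filter.atTop (nhds (w m)) :=
      ((continuous_apply m).continuousAt).tendsto.comp hu2
    obtain ⟨N, hN⟩ := Metric.tendsto_atTop.1 hcoord (‖a‖/4) (by positivity)
    have hdistN := hN N (le_refl N)
    set g₁ : StrongDual ℂ X := pst.2 with hg₁
    set g₂ : StrongDual ℂ X := (qk N).2 with hg₂
    have hnorm1 : ‖g₁‖ ≤ (n₀:ℝ) := hQnorm pst (hBQ hpstB)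
    have hnorm2 : ‖g₂‖ ≤ (n₀:ℝ) := hQnorm _ (hBQ (hqkB N))
    have hkey : g₁ (R₀ pst.1) - g₂ (R₀ pst.1) =
        (g₁ - g₂) (R₀ pst.1 - z m) + (g₁ (z m) - g₂ (z m)) := by
      simp only [ContinuousLinearMap.sub_apply, map_sub]
      ring
    have hb1 : ‖(g₁ - g₂) (R₀ pst.1 - z m)‖ ≤ ((n₀:ℝ) + (n₀:ℝ)) * ε := by
      have hzm' : ‖R₀ pst.1 - z m‖ ≤ ε := by
        rw [← dist_eq_norm]; exact le_of_lt hzm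
      calc ‖(g₁ - g₂) (R₀ pst.1 - z m)‖ ≤ ‖g₁ - g₂‖ * ‖R₀ pst.1 - z m‖ :=
            (g₁ - g₂).le_opNorm _
        _ ≤ (‖g₁‖ + ‖g₂‖) * ε := by
            apply mul_le_mul (norm_sub_le _ _) hzm' (norm_nonneg _)
            positivity
        _ ≤ ((n₀:ℝ) + (n₀:ℝ)) * ε := by nlinarith
    have hb2 : ‖g₁ (z m) - g₂ (z m)‖ < ‖a‖/4 := by
      have e1 : u N m = g₂ (z m) := by rw [← hqku N]
      have e2 : w m = g₁ (z m) := by rw [← hpstw]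
      have h := hdistN
      rw [e1, e2, dist_eq_norm] at h
      rwa [norm_sub_rev]
    have hval : ‖a‖ = ‖g₁ (R₀ pst.1) - g₂ (R₀ pst.1)‖ := by
      rw [hpR, hqR N]
      simp
    have hfinal : ‖a‖ ≤ ((n₀:ℝ) + (n₀:ℝ)) * ε + ‖a‖/4 := by
      calc ‖a‖ = ‖g₁ (R₀ pst.1) - g₂ (R₀ pst.1)‖ := hval
        _ = ‖(g₁ - g₂) (R₀ pst.1 - z m) + (g₁ (z m) - g₂ (z m))‖ := by rw [hkey]
        _ ≤ ‖(g₁ - g₂) (R₀ pst.1 - z m)‖ + ‖g₁ (z m) - g₂ (z m)‖ := norm_add_le _ _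
        _ ≤ ((n₀:ℝ) + (n₀:ℝ)) * ε + ‖a‖/4 := add_le_add hb1 (le_of_lt hb2)
    have hεb : ((n₀:ℝ) + (n₀:ℝ)) * ε ≤ ‖a‖/2 := by
      rw [hε, ← mul_div_assoc]
      rw [div_le_div_iff₀ (by positivity) (by norm_num : (0:ℝ) < 2)]
      nlinarith [norm_nonneg a, hn₀pos]
    linarith

  -- the ideal
  set I : Submodule ℂ (StrongDual ℂ X →L[ℂ] StrongDual ℂ X) :=
    { carrier := {T | ∀ x' : StrongDual ℂ X, (∀ y ∈ Y, x' y = 0) → T x' = 0}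
      add_mem' := fun {T₁ T₂} h1 h2 x' hx' => by
        simp [ContinuousLinearMap.add_apply, h1 x' hx', h2 x' hx']
      zero_mem' := fun x' _ => rfl
      smul_mem' := fun c {T₁} h1 x' hx' => by
        simp [ContinuousLinearMap.smul_apply, h1 x' hx']
        ext x
        simp } with hI
  have hImem : ∀ T, T ∈ I ↔ ∀ x' : StrongDual ℂ X, (∀ y ∈ Y, x' y = 0) → T x' = 0 := by
    intro T; rfl
  -- WOT closedness of the ideal
  have himg : (ContinuousLinearMapWOT.ofCLM : (StrongDual ℂ X →L[ℂ] StrongDual ℂ X) → (StrongDual ℂ X →WOT[ℂ] StrongDual ℂ X)) '' (I : Set _) =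
      ⋂ (x' : StrongDual ℂ X) (_ : ∀ y ∈ Y, x' y = 0) (Φ : StrongDual ℂ X →L[ℂ] ℂ),
        {W : (StrongDual ℂ X) →WOT[ℂ] (StrongDual ℂ X) | Φ (W x') = 0} := by
    ext W
    simp only [Set.mem_iInter, Set.mem_setOf_eq]
    constructor
    · rintro ⟨T₀, hT₀, rfl⟩
      intro x' hx' Φ
      rw [ContinuousLinearMapWOT.ofCLM_apply, (hImem T₀).1 hT₀ x' hx']
      simp
    · intro hW
      refine ⟨W.toCLM, ?_,
        ContinuousLinearMapWOT.ofCLM_toCLM W⟩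
      exact (hImem _).2 (fun x' hx' => eq_zero_of_forall_dual_eq_zero ℂ (fun Φ => hW x' hx' Φ))
  have hIclosed : IsClosed ((ContinuousLinearMapWOT.ofCLM : (StrongDual ℂ X →L[ℂ] StrongDual ℂ X) → (StrongDual ℂ X →WOT[ℂ] StrongDual ℂ X)) ''
      (I : Set _) : Set ((StrongDual ℂ X) →WOT[ℂ] (StrongDual ℂ X))) := by
    rw [himg]
    refine isClosed_iInter fun x' => isClosed_iInter fun hx' => isClosed_iInter fun Φ => ?_
    exact isClosed_singleton.preimage (ContinuousLinearMapWOT.continuous_dual_apply x' Φ)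
  refine ⟨I, ?_, hIclosed, ?_⟩
  · intro S T hT
    rw [hImem] at hT ⊢
    intro x' hx'
    rw [ContinuousLinearMap.comp_apply, hT x' hx', map_zero]
  · intro n hn T hT
    -- preadjoints and decompositions
    choose Sm hSm using fun i => aux_preadjoint X hrefl (T i)
    choose α R hαR hRsep using fun i => hfew (Sm i)
    have hα0 : ∀ i, α i = 0 := fun i =>
      key (T i) ((hImem (T i)).1 (hT i)) (Sm i) (R i) (α i) (hSm i) (hαR i) (hRsep i)
    have hTR : ∀ i (x' : StrongDual ℂ X) (x : X), T i x' x = x' (R i x) := by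
      intro i x' x
      rw [hSm i x' x]
      congr 1
      rw [hαR i]
      simp [hα0 i]
    set V : Submodule ℂ X := (Submodule.span ℂ (⋃ i, Set.range (R i))).topologicalClosure with hV
    have hVsep : IsSeparable (V : Set X) := by
      rw [hV, Submodule.topologicalClosure_coe]
      exact ((IsSeparable.iUnion (fun i => hRsep i)).span (R := ℂ)).closure
    obtain ⟨y₀, hy₀Y, hy₀V⟩ : ∃ y₀, y₀ ∈ Y ∧ y₀ ∉ V := by
      by_contra hcon
      push_neg at hcon
      exact hYns (hVsep.mono (fun y hy => hcon y hy))
    obtain ⟨f, hf0, hf1⟩ := aux_hb_vanish V (Submodule.isClosed_topologicalClosure _) hy₀V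
    have hfne : f ≠ 0 := by
      intro h0
      rw [h0] at hf1
      simpa using hf1
    obtain ⟨Φ₀, hΦ₀n, hΦ₀f⟩ := exists_dual_vector ℂ f (norm_ne_zero_iff.2 hfne)
    have hΦ₀ne : Φ₀ f ≠ 0 := by
      rw [hΦ₀f]
      exact fun h => norm_ne_zero_iff.2 hfne (RCLike.ofReal_eq_zero.1 h)
    set Tst : StrongDual ℂ X →L[ℂ] StrongDual ℂ X :=
      (inclusionInDoubleDual ℂ X y₀).smulRight f with hTst
    have hTstI : Tst ∈ I := by
      rw [hImem]
      intro x' hx'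
      have : x' y₀ = 0 := hx' y₀ hy₀Y
      simp [hTst, ContinuousLinearMap.smulRight_apply, NormedSpace.dual_def, this]
    have hTif : ∀ i, T i f = 0 := by
      intro i
      ext x
      rw [hTR i f x]
      have : R i x ∈ V := Submodule.le_topologicalClosure _
        (Submodule.subset_span (Set.mem_iUnion.2 ⟨i, Set.mem_range_self x⟩))
      rw [hf0 _ this]
      simp
    -- the closed set that traps the closure
    set C : Set ((StrongDual ℂ X) →WOT[ℂ] (StrongDual ℂ X)) :=
      {W : (StrongDual ℂ X) →WOT[ℂ] (StrongDual ℂ X) | Φ₀ (W f) = 0} with hC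
    have hCclosed : IsClosed C :=
      isClosed_singleton.preimage (ContinuousLinearMapWOT.continuous_dual_apply f Φ₀)
    have hgenC : (ContinuousLinearMapWOT.ofCLM : (StrongDual ℂ X →L[ℂ] StrongDual ℂ X) → (StrongDual ℂ X →WOT[ℂ] StrongDual ℂ X)) ''
        {W : StrongDual ℂ X →L[ℂ] StrongDual ℂ X |
          ∃ A : Fin n → (StrongDual ℂ X →L[ℂ] StrongDual ℂ X), W = ∑ i, A i ∘L T i} ⊆ C := by
      rintro _ ⟨W, ⟨Aop, rfl⟩, rfl⟩
      simp only [hC, Set.mem_setOf_eq, ContinuousLinearMapWOT.ofCLM_apply]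
      rw [ContinuousLinearMap.sum_apply]
      have : ∀ i, (Aop i ∘L T i) f = 0 := by
        intro i
        rw [ContinuousLinearMap.comp_apply, hTif i, map_zero]
      rw [Finset.sum_congr rfl (fun i _ => this i)]
      simp
    have hgenI : (ContinuousLinearMapWOT.ofCLM : (StrongDual ℂ X →L[ℂ] StrongDual ℂ X) → (StrongDual ℂ X →WOT[ℂ] StrongDual ℂ X)) ''
        {W : StrongDual ℂ X →L[ℂ] StrongDual ℂ X |
          ∃ A : Fin n → (StrongDual ℂ X →L[ℂ] StrongDual ℂ X), W = ∑ i, A i ∘L T i} ⊆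
        (ContinuousLinearMapWOT.ofCLM : (StrongDual ℂ X →L[ℂ] StrongDual ℂ X) → (StrongDual ℂ X →WOT[ℂ] StrongDual ℂ X)) '' (I : Set _) := by
      apply Set.image_mono
      rintro W ⟨Aop, rfl⟩
      apply Submodule.sum_mem
      intro i _
      rw [hImem]
      intro x' hx'
      rw [ContinuousLinearMap.comp_apply, (hImem (T i)).1 (hT i) x' hx', map_zero]
    rw [Set.ssubset_def]
    constructor
    · intro T₀ hT₀
      have h1 : (ContinuousLinearMapWOT.ofCLM : (StrongDual ℂ X →L[ℂ] StrongDual ℂ X) → (StrongDual ℂ X →WOT[ℂ] StrongDual ℂ X)) T₀ ∈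
          (ContinuousLinearMapWOT.ofCLM : (StrongDual ℂ X →L[ℂ] StrongDual ℂ X) → (StrongDual ℂ X →WOT[ℂ] StrongDual ℂ X)) '' (I : Set _) :=
        closure_minimal hgenI hIclosed hT₀
      obtain ⟨T₁, hT₁, hT₁eq⟩ := h1
      have : T₁ = T₀ := ContinuousLinearMapWOT.ofCLM_injective hT₁eq
      exact this ▸ hT₁
    · intro hcon
      have hTstin := hcon hTstI
      have hTstC : (ContinuousLinearMapWOT.ofCLM : (StrongDual ℂ X →L[ℂ] StrongDual ℂ X) → (StrongDual ℂ X →WOT[ℂ] StrongDual ℂ X)) Tst ∈ C :=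
        closure_minimal hgenC hCclosed hTstin
      simp only [hC, Set.mem_setOf_eq, ContinuousLinearMapWOT.ofCLM_apply] at hTstC
      have : Tst f = f := by
        simp [hTst, ContinuousLinearMap.smulRight_apply, NormedSpace.dual_def, hf1]
      rw [this] at hTstC
      exact hΦ₀ne hTstC
end

section
/- Let E be a complex Banach space with few operators, in the sense that every bounded linear operator T : E → E can be written as T = α·id_E + S for some α ∈ ℂ and some bounded operator S with separable range. If T_1, …, T_n ∈ B(E) are such that in the decompositions T_i = α_i·id_E + S_i at least one α_i is nonzero (say α_1 ≠ 0), then E = F + closure(im S_1) where F = closure(im T_1 + ⋯ + im T_n), and consequently the quotient E/F is separable. -/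
open TopologicalSpace

/-- The second case in the proof of Proposition 2.5.6: let `E` be a complex Banach space with
few operators, and let `T_1, …, T_n ∈ B(E)` have decompositions `T_i = α_i·id + S_i` with each
`S_i` of separable range and some `α_{i₀} ≠ 0`. Then `E = F + closure(im S_{i₀})`, where
`F = closure(im T_1 + ⋯ + im T_n)`, and consequently `E/F` is separable. -/
theorem separable_quotient_of_nonzero_scalar_part
    (E : Type*) [NormedAddCommGroup E] [NormedSpace ℂ E] [CompleteSpace E]
    (hfew : ∀ T : E →L[ℂ] E, ∃ (α : ℂ) (S : E →L[ℂ] E),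
      T = α • ContinuousLinearMap.id ℂ E + S ∧ IsSeparable (Set.range S))
    (n : ℕ) (hn : 0 < n)
    (T S : Fin n → (E →L[ℂ] E)) (α : Fin n → ℂ)
    (hdecomp : ∀ i, T i = α i • ContinuousLinearMap.id ℂ E + S i)
    (hSsep : ∀ i, IsSeparable (Set.range (S i)))
    (i₀ : Fin n) (hα : α i₀ ≠ 0)
    (F : Submodule ℂ E) (hF : F = (⨆ i, LinearMap.range (T i : E →ₗ[ℂ] E)).topologicalClosure) :
    F ⊔ (LinearMap.range (S i₀ : E →ₗ[ℂ] E)).topologicalClosure = ⊤ ∧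
      SeparableSpace (E ⧸ F) := by
  set C := (LinearMap.range (S i₀ : E →ₗ[ℂ] E)).topologicalClosure with hC
  have hTF : ∀ x : E, T i₀ x ∈ F := by
    intro x
    rw [hF]
    exact Submodule.le_topologicalClosure _
      (le_iSup (fun i => LinearMap.range (T i : E →ₗ[ℂ] E)) i₀ ⟨x, rfl⟩)
  have hsup : F ⊔ C = ⊤ := by
    rw [eq_top_iff]
    intro x _
    have hx : x = (α i₀)⁻¹ • (T i₀ x) + (-(α i₀)⁻¹) • (S i₀ x) := by
      have := hdecomp i₀
      have h1 : T i₀ x = α i₀ • x + S i₀ x := by rw [this]; simp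
      rw [h1]
      simp [smul_add, smul_smul, inv_mul_cancel₀ hα]
    rw [hx]
    exact Submodule.add_mem_sup (Submodule.smul_mem _ _ (hTF x))
      (Submodule.smul_mem _ _ (Submodule.le_topologicalClosure _ ⟨x, rfl⟩))
  refine ⟨hsup, ?_⟩
  have hCsep : IsSeparable (C : Set E) := (hSsep i₀).closure
  have hsurj : Set.range (fun c : C => F.mkQ (c : E)) = Set.univ := by
    rw [Set.eq_univ_iff_forall]
    intro y
    obtain ⟨x, rfl⟩ := F.mkQ_surjective y
    have : x ∈ F ⊔ C := hsup ▸ Submodule.mem_top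
    obtain ⟨f, hf, c, hc, hfc⟩ := Submodule.mem_sup.mp this
    refine ⟨⟨c, hc⟩, ?_⟩
    simp only
    rw [← hfc]
    rw [map_add]
    simp [Submodule.Quotient.mk_eq_zero, hf, Submodule.mkQ_apply]
  have himg : IsSeparable (Set.univ : Set (E ⧸ F)) := by
    rw [← hsurj, ← Set.image_univ]
    have : Set.range (fun c : C => F.mkQ (c : E)) = F.mkQ '' (C : Set E) := by
      ext y; simp [Set.mem_image]
    rw [Set.image_univ, this]
    exact hCsep.image continuous_quot_mk
  exact isSeparable_univ_iff.mp himg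
end
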